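/- Let N, T, M be positive naturals with 1 ≤ T < N and M ≥ 2, let d = gcd(N, T), n = N/d, t = T/d, and let μ be a positive natural. If N divides μ·n^{M-1} and T divides μ·Σ_{i=1}^{M-1} n^{M-1-i} t^i, then d divides μ; in particular μ·n^{M-1} ≥ d·n^{M-1}. -/

import Mathlib

theorem d_dvd_mu (N T M : ℕ) (hT : 1 ≤ T) (hTN : T < N) (hM : 2 ≤ M)
    (d n t : ℕ) (hd : d = Nat.gcd N T) (hn : n = N / d) (ht : t = T / d)
    (μ : ℕ) (hμ : 0 < μ)
    (h1 : N ∣ μ * n ^ (M - 1))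
    (h2 : T ∣ μ * ∑ i ∈ Finset.Icc 1 (M - 1), n ^ (M - 1 - i) * t ^ i) :
    d ∣ μ ∧ d * n ^ (M - 1) ≤ μ * n ^ (M - 1) := by
  have hd0 : 0 < d := by
    subst hd; exact Nat.gcd_pos_of_pos_right _ hT
  have hNd : d ∣ N := hd ▸ Nat.gcd_dvd_left N T
  have hTd : d ∣ T := hd ▸ Nat.gcd_dvd_right N T
  have hN : N = d * n := by rw [hn, Nat.mul_div_cancel' hNd]
  have hTt : T = d * t := by rw [ht, Nat.mul_div_cancel' hTd]
  have hn0 : 0 < n := by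
    rcases Nat.eq_zero_or_pos n with h | h
    · subst h; simp at hN; omega
    · exact h
  have ht0 : 0 < t := by
    rcases Nat.eq_zero_or_pos t with h | h
    · subst h; simp at hTt; omega
    · exact h
  have hcop : Nat.Coprime n t := by
    rw [hn, ht, hd]
    exact Nat.coprime_div_gcd_div_gcd (hd ▸ hd0)
  obtain ⟨K, rfl⟩ : ∃ K, M = K + 2 := ⟨M - 2, by omega⟩
  have hM1 : K + 2 - 1 = K + 1 := rfl
  set S : ℕ := ∑ j ∈ Finset.range (K + 1), n ^ (K - j) * t ^ j with hS
  -- rewrite the Icc sum as t * S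
  have hsum : (∑ i ∈ Finset.Icc 1 (K + 2 - 1), n ^ (K + 2 - 1 - i) * t ^ i) = t * S := by
    rw [hM1, hS, Finset.mul_sum, show Finset.Icc 1 (K + 1) = Finset.Ico 1 (K + 2) by
      rw [← Finset.Ico_add_one_right_eq_Icc]; rfl, Finset.sum_Ico_eq_sum_range]
    norm_num
    apply Finset.sum_congr rfl
    intro j hj
    have : K + 1 - (1 + j) = K - j := by omega
    rw [this]
    ring
  -- S = n * R + t ^ K
  have hSdec : ∃ R, S = n * R + t ^ K := by
    refine ⟨∑ j ∈ Finset.range K, n ^ (K - 1 - j) * t ^ j, ?_⟩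
    rw [hS, Finset.sum_range_succ, Nat.sub_self, pow_zero, one_mul, Finset.mul_sum]
    congr 1
    apply Finset.sum_congr rfl
    intro j hj
    simp only [Finset.mem_range] at hj
    have : K - j = (K - 1 - j) + 1 := by omega
    rw [this, pow_succ]
    ring
  obtain ⟨R, hR⟩ := hSdec
  have hcopS : Nat.Coprime (n ^ K) S := by
    apply Nat.Coprime.pow_left
    rw [hR, add_comm, Nat.coprime_add_mul_left_right]
    exact hcop.pow_right K
  have hdvd1 : d ∣ μ * n ^ K := by
    rw [hN, hM1, pow_succ, ← mul_assoc] at h1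
    exact (Nat.mul_dvd_mul_iff_right hn0).mp h1
  have hdvd2 : d ∣ μ * S := by
    rw [hTt, hsum] at h2
    have h2' : d * t ∣ (μ * S) * t := by
      have : μ * (t * S) = μ * S * t := by ring
      rwa [this] at h2
    exact (Nat.mul_dvd_mul_iff_right ht0).mp h2'
  have hdμ : d ∣ μ := by
    have := Nat.dvd_gcd hdvd1 hdvd2
    rwa [Nat.gcd_mul_left, hcopS, mul_one] at this
  exact ⟨hdμ, Nat.mul_le_mul_right _ (Nat.le_of_dvd hμ hdμ)⟩
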